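/- arXiv:1606.01661 — 3 statements merged into one kernel-verified Lean document; each statement's English description precedes it below -/
import Mathlib

section
/- The Weierstrass transform of the n-th Hermite polynomial scaled by one-half is the n-th power function: (1/√(4π)) ∫_{-∞}^∞ e^{-(x-y)²/4} H_n(y/2) dy = x^n for every real x and natural number n. -/
open Real Filter MeasureTheory

/-- Physicists' Hermite polynomials via the standard recurrence
`H₀ = 1`, `H₁(x) = 2x`, `H_{n+2}(x) = 2x H_{n+1}(x) - 2(n+1) H_n(x)`. -/
noncomputable def physHermite : ℕ → ℝ → ℝ
  | 0, _ => 1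
  | 1, x => 2 * x
  | n+2, x => 2 * x * physHermite (n+1) x - 2 * ((n : ℝ) + 1) * physHermite n x

/-- Physicists' Hermite polynomials as polynomials. -/
noncomputable def pHpoly : ℕ → Polynomial ℝ
  | 0 => 1
  | 1 => Polynomial.C 2 * Polynomial.X
  | n+2 => Polynomial.C 2 * Polynomial.X * pHpoly (n+1) - Polynomial.C (2*((n : ℝ)+1)) * pHpoly n

lemma pHpoly_eval : ∀ (n : ℕ) (x : ℝ), (pHpoly n).eval x = physHermite n x
  | 0, x => by simp [pHpoly, physHermite]
  | 1, x => by simp [pHpoly, physHermite]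
  | n+2, x => by
    simp [pHpoly, physHermite, pHpoly_eval (n+1) x, pHpoly_eval n x]

lemma pHpoly_derivative : ∀ n : ℕ,
    (pHpoly (n+1)).derivative = Polynomial.C (2*((n : ℝ)+1)) * pHpoly n
  | 0 => by simp [pHpoly]
  | 1 => by
    show (pHpoly 2).derivative = _
    simp only [pHpoly]
    simp [Polynomial.derivative_mul]
    ring
  | n+2 => by
    show (pHpoly (n+3)).derivative = _
    have h1 := pHpoly_derivative (n+1)
    have h2 := pHpoly_derivative n
    simp only [pHpoly] at h1 ⊢
    simp only [Polynomial.derivative_sub, Polynomial.derivative_mul, Polynomial.derivative_C,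
      Polynomial.derivative_X, h1, h2]
    push_cast
    simp only [Polynomial.C_add, Polynomial.C_mul, Polynomial.C_1, map_ofNat]
    ring

lemma integrable_poly_gauss (P : Polynomial ℝ) :
    Integrable fun y : ℝ => P.eval y * Real.exp (-y^2) := by
  induction P using Polynomial.induction_on' with
  | add p q hp hq => simpa [add_mul] using (hp.add hq : Integrable fun y : ℝ => p.eval y * Real.exp (-y^2) + q.eval y * Real.exp (-y^2))
  | monomial k c =>
    simp only [Polynomial.eval_monomial]
    have h0 := integrable_rpow_mul_exp_neg_mul_sq (b := 1) one_pos (s := (k : ℝ))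
      (lt_of_lt_of_le (by norm_num) (Nat.cast_nonneg k))
    simp_rw [Real.rpow_natCast, neg_mul, one_mul] at h0
    have := h0.const_mul c
    apply this.congr
    filter_upwards with y
    ring

lemma integrable_poly_gauss_shift (a : ℝ) (P : Polynomial ℝ) :
    Integrable fun y : ℝ => P.eval y * Real.exp (-(a-y)^2) := by
  refine ((integrable_poly_gauss (P.comp (Polynomial.X + Polynomial.C a))).comp_sub_right
    a).congr (Filter.Eventually.of_forall fun y => ?_)
  simp only [Polynomial.eval_comp, Polynomial.eval_add, Polynomial.eval_X, Polynomial.eval_C]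
  rw [show y - a + a = y by ring, show -(y-a)^2 = -(a-y)^2 by ring]

/-- The Gaussian-weighted integral of a polynomial. -/
noncomputable def Ig (a : ℝ) (P : Polynomial ℝ) : ℝ :=
  ∫ y : ℝ, P.eval y * Real.exp (-(a-y)^2)

lemma Ig_zero (a : ℝ) : Ig a 0 = 0 := by simp [Ig]

lemma Ig_sub (a : ℝ) (P Q : Polynomial ℝ) : Ig a (P - Q) = Ig a P - Ig a Q := by
  unfold Ig
  simp only [Polynomial.eval_sub, sub_mul]
  exact integral_sub (integrable_poly_gauss_shift a P) (integrable_poly_gauss_shift a Q)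

lemma Ig_const_mul (a c : ℝ) (P : Polynomial ℝ) : Ig a (Polynomial.C c * P) = c * Ig a P := by
  unfold Ig
  simp only [Polynomial.eval_mul, Polynomial.eval_C, mul_assoc]
  exact integral_const_mul c _

lemma Ig_ibp (a : ℝ) (P : Polynomial ℝ) :
    Ig a ((Polynomial.C (2*a) - Polynomial.C 2 * Polynomial.X) * P) = - Ig a P.derivative := by
  unfold Ig
  have key : ∫ y : ℝ, P.eval y * (2*(a-y) * Real.exp (-(a-y)^2)) =
      - ∫ y : ℝ, P.derivative.eval y * Real.exp (-(a-y)^2) := by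
    apply MeasureTheory.integral_mul_deriv_eq_deriv_mul_of_integrable
      (u := fun y => P.eval y) (u' := fun y => P.derivative.eval y)
      (v := fun y => Real.exp (-(a-y)^2)) (v' := fun y => 2*(a-y) * Real.exp (-(a-y)^2))
    · exact fun y _ => P.hasDerivAt y
    · intro y _
      have h1 : HasDerivAt (fun z : ℝ => -(a-z)^2) (2*(a-y)) y := by
        have h0 : HasDerivAt (fun z : ℝ => a - z) (-1) y := (hasDerivAt_id y).const_sub a
        have := (h0.pow 2).neg
        exact this.congr_deriv (by ring)
      have := h1.exp
      exact this.congr_deriv (by ring)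
    · have := integrable_poly_gauss_shift a
        ((Polynomial.C (2*a) - Polynomial.C 2 * Polynomial.X) * P)
      apply this.congr
      filter_upwards with y
      simp only [Pi.mul_apply, Polynomial.eval_mul, Polynomial.eval_sub, Polynomial.eval_C,
        Polynomial.eval_mul, Polynomial.eval_X]
      ring
    · have := integrable_poly_gauss_shift a P.derivative
      apply this.congr
      filter_upwards with y
      simp [Pi.mul_apply]
    · have := integrable_poly_gauss_shift a P
      apply this.congr
      filter_upwards with y
      simp [Pi.mul_apply]
  rw [← key]
  congr 1 with y
  simp only [Polynomial.eval_mul, Polynomial.eval_sub, Polynomial.eval_C, Polynomial.eval_X]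
  ring

lemma Ig_one (a : ℝ) : Ig a 1 = Real.sqrt π := by
  unfold Ig
  simp only [Polynomial.eval_one, one_mul]
  have h : (fun y : ℝ => Real.exp (-(a-y)^2)) =
      fun y : ℝ => (fun v : ℝ => Real.exp (-1 * v^2)) (y - a) := by
    funext y
    show Real.exp (-(a-y)^2) = Real.exp (-1 * (y-a)^2)
    rw [show -(a-y)^2 = -1 * (y-a)^2 by ring]
  rw [h, integral_sub_right_eq_self (fun v : ℝ => Real.exp (-1 * v^2)) a, integral_gaussian]
  norm_num

lemma Ig_succ (a : ℝ) : ∀ n : ℕ, Ig a (pHpoly (n+1)) = 2 * a * Ig a (pHpoly n)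
  | 0 => by
    have h : pHpoly 1 = Polynomial.C (2*a) * pHpoly 0 -
        (Polynomial.C (2*a) - Polynomial.C 2 * Polynomial.X) * pHpoly 0 := by
      simp [pHpoly]
    rw [h, Ig_sub, Ig_const_mul, Ig_ibp]
    simp [pHpoly, Ig_zero]
  | n+1 => by
    have h : pHpoly (n+2) = (Polynomial.C (2*a) * pHpoly (n+1) -
        (Polynomial.C (2*a) - Polynomial.C 2 * Polynomial.X) * pHpoly (n+1)) -
        Polynomial.C (2*((n : ℝ)+1)) * pHpoly n := by
      show pHpoly (n+2) = _
      simp only [pHpoly]; ring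
    rw [h, Ig_sub, Ig_sub, Ig_const_mul, Ig_const_mul, Ig_ibp, pHpoly_derivative n, Ig_const_mul]
    ring

lemma Ig_val (a : ℝ) : ∀ n : ℕ, Ig a (pHpoly n) = Real.sqrt π * (2*a)^n
  | 0 => by simpa [pHpoly] using Ig_one a
  | n+1 => by rw [Ig_succ a n, Ig_val a n]; ring

theorem weierstrass_transform_hermite (n : ℕ) (x : ℝ) :
    (Real.sqrt (4*π))⁻¹ * ∫ y : ℝ, Real.exp (-(x-y)^2/4) * physHermite n (y/2) = x ^ n := by
  have hsub := Measure.integral_comp_mul_left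
    (fun y : ℝ => Real.exp (-(x-y)^2/4) * physHermite n (y/2)) 2
  have heq : (∫ u : ℝ, (fun y : ℝ => Real.exp (-(x-y)^2/4) * physHermite n (y/2)) (2*u))
      = Real.sqrt π * x ^ n := by
    have h1 : (∫ u : ℝ, (fun y : ℝ => Real.exp (-(x-y)^2/4) * physHermite n (y/2)) (2*u))
        = Ig (x/2) (pHpoly n) := by
      unfold Ig
      congr 1 with u
      show Real.exp (-(x-2*u)^2/4) * physHermite n (2*u/2) = _
      rw [pHpoly_eval, show (2:ℝ)*u/2 = u by ring,
        show -(x-2*u)^2/4 = -((x/2)-u)^2 by ring, mul_comm]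
    rw [h1, Ig_val, show (2*(x/2) : ℝ) = x by ring]
  rw [heq] at hsub
  have h2 : (∫ y : ℝ, Real.exp (-(x-y)^2/4) * physHermite n (y/2))
      = 2 * (Real.sqrt π * x ^ n) := by
    rw [hsub, smul_eq_mul, show |(2:ℝ)⁻¹| = 2⁻¹ by norm_num]
    ring
  have hπ : Real.sqrt (4*π) = 2 * Real.sqrt π := by
    rw [show (4:ℝ)*π = 2^2 * π by ring, Real.sqrt_mul (by positivity), Real.sqrt_sq (by norm_num)]
  have hs : Real.sqrt π ≠ 0 := by positivity
  rw [h2, hπ]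
  field_simp
end

section
/- For every natural number n, (1/√(2π)) ∫_{-∞}^∞ e^{-(p-A)²/2} (1/√2)^n H_n(p/√2) dp = A^n for all real A, where H_n is the physicists' Hermite polynomial. -/
open Real Filter MeasureTheory
open Polynomial

noncomputable def physHermiteD : ℕ → ℝ → ℝ
  | 0, _ => 0
  | n+1, x => 2 * ((n : ℝ) + 1) * physHermite n x

lemma physHermiteD_zero (x : ℝ) : physHermiteD 0 x = 0 := rfl
lemma physHermiteD_succ (n : ℕ) (x : ℝ) :
    physHermiteD (n+1) x = 2 * ((n : ℝ) + 1) * physHermite n x := rfl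

lemma physHermite_succ_eq (n : ℕ) (x : ℝ) :
    physHermite (n+1) x = 2 * x * physHermite n x - physHermiteD n x := by
  cases n with
  | zero => simp [physHermite, physHermiteD]
  | succ m => simp [physHermite, physHermiteD]

lemma hasDerivAt_physHermite (n : ℕ) (x : ℝ) :
    HasDerivAt (physHermite n) (physHermiteD n x) x := by
  induction n using Nat.strong_induction_on generalizing x with
  | _ n ih =>
    match n with
    | 0 =>
      have : physHermite 0 = fun _ : ℝ => (1:ℝ) := by funext y; rfl
      rw [this, physHermiteD_zero]; exact hasDerivAt_const x (1:ℝ)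
    | 1 =>
      have : physHermite 1 = fun y : ℝ => 2 * y := by funext y; rfl
      rw [this]
      have : physHermiteD 1 x = 2 := by rw [physHermiteD_succ]; simp [physHermite]
      rw [this]
      simpa using (hasDerivAt_id x).const_mul (2:ℝ)
    | (m+2) =>
      have h1 : HasDerivAt (physHermite (m+1)) (physHermiteD (m+1) x) x :=
        ih (m+1) (by omega) x
      have h0 : HasDerivAt (physHermite m) (physHermiteD m x) x := ih m (by omega) x
      have hx : HasDerivAt (fun y : ℝ => 2 * y) 2 x := by
        simpa using (hasDerivAt_id x).const_mul (2:ℝ)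
      have hmain : HasDerivAt
          (fun y => 2 * y * physHermite (m+1) y - 2 * ((m:ℝ)+1) * physHermite m y)
          (2 * x * physHermiteD (m+1) x + 2 * physHermite (m+1) x
            - 2 * ((m:ℝ)+1) * physHermiteD m x) x := by
        refine ((hx.mul h1).sub (h0.const_mul (2 * ((m:ℝ)+1)))).congr_deriv ?_
        ring
      have hfun : physHermite (m+2)
          = fun y => 2 * y * physHermite (m+1) y - 2 * ((m:ℝ)+1) * physHermite m y := by
        funext y; rfl
      rw [hfun]
      convert hmain using 1
      have key : 2 * x * physHermiteD (m+1) x - 2 * ((m:ℝ)+1) * physHermiteD m x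
          = 2 * ((m:ℝ)+1) * physHermite (m+1) x := by
        rw [physHermiteD_succ]
        nlinarith [physHermite_succ_eq m x]
      rw [physHermiteD_succ]
      push_cast
      nlinarith [key]

noncomputable def PH : ℕ → Polynomial ℝ
  | 0 => 1
  | 1 => C 2 * X
  | n+2 => C 2 * X * PH (n+1) - C (2 * ((n : ℝ) + 1)) * PH n

lemma physHermite_eval (n : ℕ) (x : ℝ) : physHermite n x = (PH n).eval x := by
  induction n using Nat.strong_induction_on generalizing x with
  | _ n ih =>
    match n with
    | 0 => simp [physHermite, PH]
    | 1 => simp [physHermite, PH]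
    | (m+2) =>
      have h1 := ih (m+1) (by omega) x
      have h0 := ih m (by omega) x
      show 2 * x * physHermite (m+1) x - 2 * ((m:ℝ)+1) * physHermite m x = _
      rw [h1, h0]
      simp [PH]

lemma integrable_pow_gauss (A : ℝ) (k : ℕ) :
    Integrable fun p : ℝ => p ^ k * Real.exp (-(p-A)^2/2) := by
  have h0 : Integrable fun x : ℝ => x ^ ((k:ℝ)) * Real.exp (-(4:ℝ)⁻¹ * x ^ 2) :=
    integrable_rpow_mul_exp_neg_mul_sq (by norm_num) (lt_of_lt_of_le (by norm_num) (Nat.cast_nonneg k) : (-1:ℝ) < (k:ℝ))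
  have h : Integrable fun x : ℝ => |x| ^ k * Real.exp (-(4:ℝ)⁻¹ * x ^ 2) := by
    have := h0.abs
    simpa [Real.rpow_natCast, abs_mul, abs_pow, abs_of_pos (Real.exp_pos _)] using this
  refine Integrable.mono' (h.const_mul (Real.exp (A^2/2))) ?_ ?_
  · apply Continuous.aestronglyMeasurable
    continuity
  · filter_upwards with x
    rw [norm_mul]
    have h1 : ‖x ^ k‖ = |x| ^ k := by
      rw [Real.norm_eq_abs, abs_pow]
    have h2 : ‖Real.exp (-(x-A)^2/2)‖ ≤ Real.exp (A^2/2) * Real.exp (-(4:ℝ)⁻¹ * x^2) := by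
      rw [Real.norm_eq_abs, abs_of_pos (Real.exp_pos _), ← Real.exp_add]
      apply Real.exp_le_exp.2
      nlinarith [sq_nonneg (x - 2*A)]
    calc ‖x ^ k‖ * ‖Real.exp (-(x-A)^2/2)‖
        ≤ |x| ^ k * (Real.exp (A^2/2) * Real.exp (-(4:ℝ)⁻¹ * x^2)) := by
          rw [h1]; exact mul_le_mul_of_nonneg_left h2 (by positivity)
      _ = Real.exp (A^2/2) * (|x| ^ k * Real.exp (-(4:ℝ)⁻¹ * x^2)) := by ring

lemma integrable_gauss_poly (A : ℝ) (P : Polynomial ℝ) :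
    Integrable fun p : ℝ => Real.exp (-(p-A)^2/2) * P.eval p := by
  induction P using Polynomial.induction_on' with
  | add p q hp hq => simpa [mul_add] using hp.fun_add hq
  | monomial k a =>
    have := (integrable_pow_gauss A k).const_mul a
    refine this.congr ?_
    filter_upwards with x
    simp only [eval_monomial]
    ring
noncomputable def PHD : ℕ → Polynomial ℝ
  | 0 => 0
  | n+1 => C (2 * ((n : ℝ) + 1)) * PH n


lemma physHermiteD_eval (n : ℕ) (x : ℝ) : physHermiteD n x = (PHD n).eval x := by
  cases n with
  | zero => simp [physHermiteD, PHD]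
  | succ m => simp [physHermiteD, PHD, physHermite_eval]

lemma integrable_gauss_scaled (A : ℝ) (P : Polynomial ℝ) :
    Integrable fun p : ℝ => Real.exp (-(p-A)^2/2) * P.eval (p / Real.sqrt 2) := by
  have h := integrable_gauss_poly A (P.comp (C (Real.sqrt 2)⁻¹ * X))
  refine h.congr (Filter.Eventually.of_forall fun p => ?_)
  beta_reduce
  simp only [eval_comp, eval_mul, eval_C, eval_X]
  congr 2
  rw [div_eq_inv_mul]

lemma hasDerivAt_gauss (A p : ℝ) :
    HasDerivAt (fun p : ℝ => Real.exp (-(p-A)^2/2)) (-(p-A) * Real.exp (-(p-A)^2/2)) p := by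
  have h1 : HasDerivAt (fun p : ℝ => -(p-A)^2/2) (-(p-A)) p := by
    have := (((hasDerivAt_id p).sub_const A).pow 2).neg.div_const 2
    refine this.congr_deriv ?_
    simp; ring
  simpa [mul_comm] using h1.exp

lemma hasDerivAt_physHermite_scaled (n : ℕ) (p : ℝ) :
    HasDerivAt (fun p : ℝ => physHermite n (p / Real.sqrt 2))
      (physHermiteD n (p / Real.sqrt 2) * (Real.sqrt 2)⁻¹) p := by
  have hinner : HasDerivAt (fun p : ℝ => p / Real.sqrt 2) (Real.sqrt 2)⁻¹ p := by
    simpa [one_div] using (hasDerivAt_id p).div_const (Real.sqrt 2)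
  exact (hasDerivAt_physHermite n (p / Real.sqrt 2)).comp p hinner

lemma step (n : ℕ) (A : ℝ) :
    (∫ p : ℝ, Real.exp (-(p-A)^2/2) * physHermite (n+1) (p / Real.sqrt 2))
      = Real.sqrt 2 * A * ∫ p : ℝ, Real.exp (-(p-A)^2/2) * physHermite n (p / Real.sqrt 2) := by
  set s : ℝ := Real.sqrt 2 with hs
  have hs0 : 0 < s := Real.sqrt_pos.2 (by norm_num)
  have hs2 : s ^ 2 = 2 := Real.sq_sqrt (by norm_num)
  -- integrabilities
  have iH : Integrable fun p : ℝ => Real.exp (-(p-A)^2/2) * physHermite n (p / s) := by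
    refine (integrable_gauss_scaled A (PH n)).congr (Filter.Eventually.of_forall fun p => ?_)
    beta_reduce
    rw [physHermite_eval]
  have iD : Integrable fun p : ℝ => Real.exp (-(p-A)^2/2) * physHermiteD n (p / s) := by
    refine (integrable_gauss_scaled A (PHD n)).congr (Filter.Eventually.of_forall fun p => ?_)
    beta_reduce
    rw [physHermiteD_eval]
  have iPH : Integrable fun p : ℝ => Real.exp (-(p-A)^2/2) * ((p - A) * physHermite n (p / s)) := by
    refine (integrable_gauss_scaled A ((C s * X - C A) * PH n)).congr
      (Filter.Eventually.of_forall fun p => ?_)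
    have h' : s * (p / s) = p := mul_div_cancel₀ p hs0.ne'
    beta_reduce
    rw [← hs]
    simp only [eval_mul, eval_sub, eval_C, eval_mul, eval_X, h', physHermite_eval]
  -- integration by parts
  have hIBP : (∫ p : ℝ, physHermite n (p / s) * (-(p-A) * Real.exp (-(p-A)^2/2)))
      = - ∫ p : ℝ, (physHermiteD n (p / s) * s⁻¹) * Real.exp (-(p-A)^2/2) := by
    refine integral_mul_deriv_eq_deriv_mul_of_integrable
      (fun x _ => hasDerivAt_physHermite_scaled n x) (fun x _ => hasDerivAt_gauss A x) ?_ ?_ ?_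
    · refine iPH.neg.congr (Filter.Eventually.of_forall fun p => ?_)
      simp only [Pi.neg_apply, Pi.mul_apply]; ring
    · refine (iD.const_mul s⁻¹).congr (Filter.Eventually.of_forall fun p => ?_)
      simp only [Pi.mul_apply]; ring
    · refine iH.congr (Filter.Eventually.of_forall fun p => ?_)
      simp only [Pi.mul_apply]; ring
  set J1 : ℝ := ∫ p : ℝ, Real.exp (-(p-A)^2/2) * ((p - A) * physHermite n (p / s)) with hJ1
  set J2 : ℝ := ∫ p : ℝ, Real.exp (-(p-A)^2/2) * physHermite n (p / s) with hJ2
  set J3 : ℝ := ∫ p : ℝ, Real.exp (-(p-A)^2/2) * physHermiteD n (p / s) with hJ3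
  have e1 : (∫ p : ℝ, physHermite n (p / s) * (-(p-A) * Real.exp (-(p-A)^2/2))) = -J1 := by
    rw [hJ1, ← integral_neg]
    exact integral_congr_ae (Filter.Eventually.of_forall fun p => by ring)
  have e2 : (∫ p : ℝ, (physHermiteD n (p / s) * s⁻¹) * Real.exp (-(p-A)^2/2)) = s⁻¹ * J3 := by
    rw [hJ3, ← integral_const_mul]
    exact integral_congr_ae (Filter.Eventually.of_forall fun p => by ring)
  have hJ13 : J1 = s⁻¹ * J3 := by
    have := hIBP
    rw [e1, e2] at this
    linarith
  -- expand the (n+1) integrand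
  have hsub : (∫ p : ℝ, ((2*A/s) * (Real.exp (-(p-A)^2/2) * physHermite n (p / s))
        - Real.exp (-(p-A)^2/2) * physHermiteD n (p / s)))
      = (2*A/s) * J2 - J3 := by
    rw [integral_sub (iH.const_mul _) iD, integral_const_mul, hJ2, hJ3]
  have hadd : (∫ p : ℝ, ((2/s) * (Real.exp (-(p-A)^2/2) * ((p - A) * physHermite n (p / s)))
        + ((2*A/s) * (Real.exp (-(p-A)^2/2) * physHermite n (p / s))
          - Real.exp (-(p-A)^2/2) * physHermiteD n (p / s))))
      = (2/s) * J1 + ((2*A/s) * J2 - J3) := by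
    have isub : Integrable (fun p : ℝ => (2*A/s) * (Real.exp (-(p-A)^2/2) * physHermite n (p / s))
        - Real.exp (-(p-A)^2/2) * physHermiteD n (p / s)) := by
      exact (iH.const_mul _).sub iD
    rw [integral_add (iPH.const_mul _) isub, hsub, integral_const_mul, hJ1]
  have expand : (∫ p : ℝ, Real.exp (-(p-A)^2/2) * physHermite (n+1) (p / s))
      = (2/s) * J1 + ((2*A/s) * J2 - J3) := by
    rw [← hadd]
    refine integral_congr_ae (Filter.Eventually.of_forall fun p => ?_)
    beta_reduce
    rw [physHermite_succ_eq]
    have hps : p / s = p * s⁻¹ := div_eq_mul_inv p s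
    field_simp
    ring
  have h2s : 2 / s = s := by
    rw [eq_comm, eq_div_iff hs0.ne', ← sq, hs2]
  rw [expand, hJ13, h2s]
  have : s * (s⁻¹ * J3) = J3 := by
    rw [← mul_assoc, mul_inv_cancel₀ hs0.ne', one_mul]
  rw [this]
  have hA : 2 * A / s = s * A := by
    rw [div_eq_iff hs0.ne']; linear_combination (-A) * hs2
  rw [hA]; ring

lemma gauss_base (A : ℝ) :
    (∫ p : ℝ, Real.exp (-(p-A)^2/2)) = Real.sqrt (2*π) := by
  have h1 : (∫ p : ℝ, Real.exp (-(p-A)^2/2))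
      = ∫ p : ℝ, Real.exp (-(1/2) * (p - A)^2) := by
    refine integral_congr_ae (Filter.Eventually.of_forall fun p => ?_)
    beta_reduce; congr 1; ring
  have h2 : (∫ p : ℝ, Real.exp (-(1/2) * (p - A)^2))
      = ∫ p : ℝ, Real.exp (-(1/2) * p^2) :=
    integral_sub_right_eq_self (fun p => Real.exp (-(1/2) * p^2)) A
  rw [h1, h2, integral_gaussian]
  congr 1
  field_simp

lemma integral_physHermite (n : ℕ) (A : ℝ) :
    (∫ p : ℝ, Real.exp (-(p-A)^2/2) * physHermite n (p / Real.sqrt 2))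
      = (Real.sqrt 2 * A) ^ n * Real.sqrt (2*π) := by
  induction n with
  | zero =>
    have : ∀ p : ℝ, physHermite 0 (p / Real.sqrt 2) = 1 := fun _ => rfl
    simp only [this, mul_one, pow_zero, one_mul]
    exact gauss_base A
  | succ m ih =>
    rw [step m A, ih, pow_succ]
    ring

theorem weierstrass_transform_hermite_scaled (n : ℕ) (A : ℝ) :
    (Real.sqrt (2*π))⁻¹ *
      ∫ p : ℝ, Real.exp (-(p-A)^2/2) * ((1 / Real.sqrt 2) ^ n * physHermite n (p / Real.sqrt 2))
      = A ^ n := by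
  have hpull : (∫ p : ℝ, Real.exp (-(p-A)^2/2)
        * ((1 / Real.sqrt 2) ^ n * physHermite n (p / Real.sqrt 2)))
      = (1 / Real.sqrt 2) ^ n
        * ∫ p : ℝ, Real.exp (-(p-A)^2/2) * physHermite n (p / Real.sqrt 2) := by
    rw [← integral_const_mul]
    exact integral_congr_ae (Filter.Eventually.of_forall fun p => by beta_reduce; ring)
  rw [hpull, integral_physHermite n A]
  have hs0 : (0:ℝ) < Real.sqrt 2 := Real.sqrt_pos.2 (by norm_num)
  have hp0 : (0:ℝ) < Real.sqrt (2*π) := Real.sqrt_pos.2 (by positivity)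
  have : (1 / Real.sqrt 2) ^ n * (Real.sqrt 2 * A) ^ n = A ^ n := by
    rw [← mul_pow]
    congr 1
    field_simp
  calc (Real.sqrt (2*π))⁻¹ * ((1 / Real.sqrt 2) ^ n * ((Real.sqrt 2 * A) ^ n * Real.sqrt (2*π)))
      = ((1 / Real.sqrt 2) ^ n * (Real.sqrt 2 * A) ^ n) * ((Real.sqrt (2*π))⁻¹ * Real.sqrt (2*π)) := by
        ring
    _ = A ^ n := by rw [this, inv_mul_cancel₀ hp0.ne', mul_one]
end

section
/- There is no measurable function g : ℝ → ℝ and real number p₀ with constants L > 0 and c < 0 such that g(p) ≤ L e^{p²/4} for p ≤ p₀, g(p) ≤ c for p > p₀, and (1/√(2π)) ∫_{-∞}^∞ e^{-(p-A)²/2} g(p) dp > 0 for all real A. (Equivalently: with such an upper envelope, the Gaussian average becomes negative for sufficiently large A.) -/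
open Real Filter MeasureTheory

lemma gauss_int (b a : ℝ) (hb : 0 < b) :
    Integrable (fun p : ℝ => Real.exp (-b * (p - a)^2)) :=
  (integrable_exp_neg_mul_sq hb).comp_sub_right a

theorem no_negative_envelope_with_positive_pressure :
    ¬ ∃ (g : ℝ → ℝ) (p₀ L c : ℝ), Measurable g ∧ 0 < L ∧ c < 0 ∧
      (∀ p : ℝ, p ≤ p₀ → g p ≤ L * Real.exp (p^2/4)) ∧
      (∀ p : ℝ, p₀ < p → g p ≤ c) ∧
      (∀ A : ℝ, 0 < (Real.sqrt (2*π))⁻¹ * ∫ p : ℝ, Real.exp (-(p-A)^2/2) * g p) := by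
  rintro ⟨g, p₀, L, c, hg, hL, hc, hleft, hright, hpos⟩
  -- choose a suitable large A
  obtain ⟨A, hA2, hA1, hA0⟩ : ∃ A : ℝ,
      L * Real.exp (A^2/2 - 3*(2*A - p₀)^2/16) * Real.sqrt (16*π)
        < -(c * Real.exp (-(1:ℝ)/2)) ∧ p₀ < A ∧ 0 ≤ A := by
    have hcpos : 0 < -(c * Real.exp (-(1:ℝ)/2)) := by
      have := Real.exp_pos (-(1:ℝ)/2); nlinarith
    have htend : Tendsto (fun A : ℝ =>
        L * Real.exp (A^2/2 - 3*(2*A - p₀)^2/16) * Real.sqrt (16*π)) atTop (nhds 0) := by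
      have h1 : Tendsto (fun A : ℝ => A^2/2 - 3*(2*A - p₀)^2/16) atTop atBot := by
        have heq : (fun A : ℝ => A^2/2 - 3*(2*A - p₀)^2/16)
            = fun A : ℝ => -(((A - (3/2)*p₀)/2)^2) + (3/8)*p₀^2 := by
          funext A; ring
        rw [heq]
        apply tendsto_atBot_add_const_right
        apply Filter.tendsto_neg_atBot_iff.mpr
        have ha : Tendsto (fun A : ℝ => (A - (3/2)*p₀)/2) atTop atTop := by
          apply Tendsto.atTop_div_const (by norm_num)
          exact tendsto_atTop_add_const_right _ _ tendsto_id
        exact (tendsto_pow_atTop two_ne_zero).comp ha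
      have h2 : Tendsto (fun A : ℝ => Real.exp (A^2/2 - 3*(2*A - p₀)^2/16)) atTop (nhds 0) :=
        Real.tendsto_exp_atBot.comp h1
      have h3 := (h2.const_mul L).mul_const (Real.sqrt (16*π))
      simpa using h3
    have e1 := htend.eventually (gt_mem_nhds hcpos)
    obtain ⟨A, h1, h2, h3⟩ := (e1.and ((eventually_gt_atTop p₀).and (eventually_ge_atTop 0))).exists
    exact ⟨A, h1, h2, h3⟩
  -- positivity of the integral
  have hπ : 0 < Real.sqrt (2*π) := Real.sqrt_pos.mpr (by positivity)
  have hI : 0 < ∫ p : ℝ, Real.exp (-(p-A)^2/2) * g p := by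
    have h := hpos A
    by_contra h'
    push_neg at h'
    nlinarith [inv_pos.mpr hπ]
  have hfint : Integrable (fun p : ℝ => Real.exp (-(p-A)^2/2) * g p) := by
    by_contra h
    rw [integral_undef h] at hI
    exact lt_irrefl 0 hI
  set φ : ℝ → ℝ := fun p =>
    if p ≤ p₀ then L * Real.exp (A^2/2 - (p-2*A)^2/4) else c * Real.exp (-(p-A)^2/2) with hφdef
  have hg1 : Integrable (fun p : ℝ => Real.exp (-(1/4 : ℝ) * (p - 2*A)^2)) :=
    gauss_int _ _ (by norm_num)
  have hg2 : Integrable (fun p : ℝ => Real.exp (-(1/2 : ℝ) * (p - A)^2)) :=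
    gauss_int _ _ (by norm_num)
  have hexp2 : (fun p : ℝ => Real.exp (-(p-A)^2/2)) = fun p => Real.exp (-(1/2:ℝ)*(p-A)^2) := by
    funext p; ring_nf
  have hexp1 : ∀ p : ℝ, Real.exp (A^2/2 - (p-2*A)^2/4)
      = Real.exp (A^2/2) * Real.exp (-(1/4:ℝ)*(p-2*A)^2) := by
    intro p; rw [← Real.exp_add]; ring_nf
  have hφmeas : Measurable φ := by
    apply Measurable.ite measurableSet_Iic
    · fun_prop
    · fun_prop
  have hFint : Integrable (fun p : ℝ =>
      L * Real.exp (A^2/2) * Real.exp (-(1/4:ℝ)*(p-2*A)^2)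
        + |c| * Real.exp (-(1/2:ℝ)*(p-A)^2)) :=
    (hg1.const_mul _).add (hg2.const_mul _)
  have hφint : Integrable φ := by
    apply hFint.mono' hφmeas.aestronglyMeasurable
    filter_upwards with p
    by_cases hp : p ≤ p₀
    · simp only [hφdef, if_pos hp, Real.norm_eq_abs]
      rw [abs_of_nonneg (by positivity), hexp1 p, ← mul_assoc]
      have h0 : 0 ≤ |c| * Real.exp (-(1/2:ℝ)*(p-A)^2) := by positivity
      linarith
    · simp only [hφdef, if_neg hp, Real.norm_eq_abs]
      rw [abs_mul, abs_of_nonneg (Real.exp_pos _).le]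
      have h0 : 0 ≤ L * Real.exp (A^2/2) * Real.exp (-(1/4:ℝ)*(p-2*A)^2) := by positivity
      have h1 : Real.exp (-(p-A)^2/2) = Real.exp (-(1/2:ℝ)*(p-A)^2) := by ring_nf
      rw [h1]; linarith
  -- pointwise bound
  have hle : ∀ p : ℝ, Real.exp (-(p-A)^2/2) * g p ≤ φ p := by
    intro p
    by_cases hp : p ≤ p₀
    · simp only [hφdef, if_pos hp]
      have h1 : Real.exp (-(p-A)^2/2) * g p
          ≤ Real.exp (-(p-A)^2/2) * (L * Real.exp (p^2/4)) :=
        mul_le_mul_of_nonneg_left (hleft p hp) (Real.exp_pos _).le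
      have h2 : Real.exp (-(p-A)^2/2) * (L * Real.exp (p^2/4))
          = L * Real.exp (A^2/2 - (p-2*A)^2/4) := by
        rw [mul_comm, mul_assoc, ← Real.exp_add]
        congr 1
        ring_nf
      linarith
    · simp only [hφdef, if_neg hp]
      have h1 := hright p (lt_of_not_ge hp)
      calc Real.exp (-(p-A)^2/2) * g p ≤ Real.exp (-(p-A)^2/2) * c :=
            mul_le_mul_of_nonneg_left h1 (Real.exp_pos _).le
        _ = c * Real.exp (-(p-A)^2/2) := mul_comm _ _
  have step1 : (∫ p : ℝ, Real.exp (-(p-A)^2/2) * g p) ≤ ∫ p : ℝ, φ p :=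
    integral_mono hfint hφint hle
  have hsplit : (∫ p : ℝ, φ p)
      = (∫ p in Set.Iic p₀, φ p) + ∫ p in Set.Ioi p₀, φ p :=
    (intervalIntegral.integral_Iic_add_Ioi hφint.integrableOn hφint.integrableOn).symm
  -- left piece
  have hleft1 : (∫ p in Set.Iic p₀, φ p)
      = ∫ p in Set.Iic p₀, L * Real.exp (A^2/2 - (p-2*A)^2/4) :=
    setIntegral_congr_fun measurableSet_Iic (fun p hp => if_pos hp)
  have hint1 : Integrable (fun p : ℝ => L * Real.exp (A^2/2 - (p-2*A)^2/4)) := by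
    have : (fun p : ℝ => L * Real.exp (A^2/2 - (p-2*A)^2/4))
        = fun p => (L * Real.exp (A^2/2)) * Real.exp (-(1/4:ℝ)*(p-2*A)^2) := by
      funext p; rw [hexp1 p]; ring
    rw [this]; exact hg1.const_mul _
  have hint2 : Integrable (fun p : ℝ =>
      L * Real.exp (A^2/2 - 3*(2*A - p₀)^2/16) * Real.exp (-(1/16:ℝ)*(p-2*A)^2)) :=
    (gauss_int _ _ (by norm_num)).const_mul _
  have hleft2 : (∫ p in Set.Iic p₀, L * Real.exp (A^2/2 - (p-2*A)^2/4))
      ≤ ∫ p in Set.Iic p₀,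
          L * Real.exp (A^2/2 - 3*(2*A - p₀)^2/16) * Real.exp (-(1/16:ℝ)*(p-2*A)^2) := by
    apply setIntegral_mono_on hint1.integrableOn hint2.integrableOn measurableSet_Iic
    intro p hp
    have hp' : p ≤ p₀ := hp
    rw [mul_assoc, ← Real.exp_add]
    apply mul_le_mul_of_nonneg_left _ hL.le
    apply Real.exp_le_exp.mpr
    nlinarith [sq_nonneg (p - 2*A), sq_nonneg (2*A - p₀)]
  have hleft3 : (∫ p in Set.Iic p₀,
        L * Real.exp (A^2/2 - 3*(2*A - p₀)^2/16) * Real.exp (-(1/16:ℝ)*(p-2*A)^2))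
      ≤ L * Real.exp (A^2/2 - 3*(2*A - p₀)^2/16) * Real.sqrt (16*π) := by
    have h1 := setIntegral_le_integral (s := Set.Iic p₀) hint2 (ae_of_all _ (fun p => by positivity))
    have h2 : (∫ p : ℝ, L * Real.exp (A^2/2 - 3*(2*A - p₀)^2/16)
          * Real.exp (-(1/16:ℝ)*(p-2*A)^2))
        = L * Real.exp (A^2/2 - 3*(2*A - p₀)^2/16) * Real.sqrt (16*π) := by
      rw [integral_const_mul]
      congr 1
      rw [integral_sub_right_eq_self (fun p => Real.exp (-(1/16:ℝ)*p^2)) (2*A)]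
      rw [integral_gaussian]
      congr 1
      ring
    linarith [h1, h2.le, h2.ge]
  -- right piece
  have hJint : IntegrableOn (fun p : ℝ => Real.exp (-(p-A)^2/2)) (Set.Ioi p₀) := by
    rw [hexp2]; exact hg2.integrableOn
  have hr1 : (∫ p in Set.Ioi p₀, φ p)
      = c * ∫ p in Set.Ioi p₀, Real.exp (-(p-A)^2/2) := by
    rw [← integral_const_mul]
    exact setIntegral_congr_fun measurableSet_Ioi (fun p hp => by
      exact if_neg (not_le.mpr hp))
  have hJ : Real.exp (-(1:ℝ)/2) ≤ ∫ p in Set.Ioi p₀, Real.exp (-(p-A)^2/2) := by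
    have hsub : Set.Ioc A (A+1) ⊆ Set.Ioi p₀ := fun x hx => lt_trans hA1 hx.1
    have h2 : (∫ p in Set.Ioc A (A+1), Real.exp (-(p-A)^2/2))
        ≤ ∫ p in Set.Ioi p₀, Real.exp (-(p-A)^2/2) :=
      setIntegral_mono_set hJint (ae_of_all _ (fun p => (Real.exp_pos _).le))
        (HasSubset.Subset.eventuallyLE hsub)
    have h4 : (∫ _ in Set.Ioc A (A+1), Real.exp (-(1:ℝ)/2))
        ≤ ∫ p in Set.Ioc A (A+1), Real.exp (-(p-A)^2/2) := by
      apply setIntegral_mono_on (integrableOn_const measure_Ioc_lt_top.ne)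
        (hJint.mono_set hsub) measurableSet_Ioc
      intro p hp
      apply Real.exp_le_exp.mpr
      obtain ⟨hp1, hp2⟩ := hp
      nlinarith
    have h5 : (∫ _ in Set.Ioc A (A+1), Real.exp (-(1:ℝ)/2)) = Real.exp (-(1:ℝ)/2) := by
      rw [setIntegral_const, Real.volume_real_Ioc_of_le (by linarith), show A+1-A = (1:ℝ) by ring,
        one_smul]
    linarith
  have hr2 : c * (∫ p in Set.Ioi p₀, Real.exp (-(p-A)^2/2)) ≤ c * Real.exp (-(1:ℝ)/2) :=
    mul_le_mul_of_nonpos_left hJ hc.le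
  linarith [hI, hA2, step1, hsplit, hleft1, hleft2, hleft3, hr1, hr2]
end
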